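/- Let R be a Noetherian local ring, h ∈ R a nonzerodivisor, b an ideal of R primary to the maximal ideal. Let T = ⊕_{k≥0} a_k/a_{k+1} with a_k = (h^k), and let in(b) ⊆ T be the ideal generated by the initial forms in(f) = [f] ∈ a_k/a_{k+1} for f ∈ b with ord_h(f) = k. Then ℓ(R/b) = ℓ(T/in(b)), i.e., the colength is preserved under passing to the initial ideal. -/

import Mathlib

open Submodule Module

section helpers

variable {S M : Type*} [Field S] [AddCommGroup M] [Module S M]

lemma finrank_rel9 (K N : Submodule S M) (hNK : N ≤ K) [FiniteDimensional S (M ⧸ N)] :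
    Module.finrank S (M ⧸ N) =
      Module.finrank S (K ⧸ Submodule.comap K.subtype N) + Module.finrank S (M ⧸ K) := by
  have e1 : (((M ⧸ N) ⧸ (K.map N.mkQ))) ≃ₗ[S] M ⧸ K :=
    Submodule.quotientQuotientEquivQuotient N K hNK
  have hker : LinearMap.ker (N.mkQ.comp K.subtype) = Submodule.comap K.subtype N := by
    rw [LinearMap.ker_comp, Submodule.ker_mkQ]
  have hrange : LinearMap.range (N.mkQ.comp K.subtype) = K.map N.mkQ := by
    rw [LinearMap.range_comp, Submodule.range_subtype]
  have e2 : (K ⧸ Submodule.comap K.subtype N) ≃ₗ[S] (K.map N.mkQ) :=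
    (Submodule.quotEquivOfEq _ _ hker.symm).trans
      ((LinearMap.quotKerEquivRange _).trans (LinearEquiv.ofEq _ _ hrange))
  rw [e2.finrank_eq, e1.symm.finrank_eq, add_comm]
  exact ((K.map N.mkQ).finrank_quotient_add_finrank).symm

end helpers

section rs

variable {S R : Type*} [Field S] [CommRing R] [Algebra S R]

lemma restrictScalars_sup9 (I J : Ideal R) :
    Submodule.restrictScalars S ((I ⊔ J : Ideal R) : Submodule R R) =
      Submodule.restrictScalars S (I : Submodule R R) ⊔
        Submodule.restrictScalars S (J : Submodule R R) := by
  refine le_antisymm ?_ (sup_le ?_ ?_)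
  · intro x hx
    rw [Submodule.restrictScalars_mem] at hx
    obtain ⟨y, hy, z, hz, rfl⟩ := Submodule.mem_sup.1 hx
    exact Submodule.add_mem_sup (by simpa using hy) (by simpa using hz)
  · intro x hx; rw [Submodule.restrictScalars_mem] at hx ⊢; exact Submodule.mem_sup_left hx
  · intro x hx; rw [Submodule.restrictScalars_mem] at hx ⊢; exact Submodule.mem_sup_right hx

lemma restrictScalars_inf9 (I J : Ideal R) :
    Submodule.restrictScalars S ((I ⊓ J : Ideal R) : Submodule R R) =
      Submodule.restrictScalars S (I : Submodule R R) ⊓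
        Submodule.restrictScalars S (J : Submodule R R) := by
  ext x; simp

end rs

theorem stmt9 (R : Type) [CommRing R] [Algebra ℂ R] [IsNoetherianRing R] [IsLocalRing R]
    (h : R) (hh : h ∈ nonZeroDivisors R) (hm : h ∈ IsLocalRing.maximalIdeal R)
    (b : Ideal R) (hb : b.radical = IsLocalRing.maximalIdeal R)
    [FiniteDimensional ℂ (R ⧸ b)] :
    Module.finrank ℂ (R ⧸ b) =
      ∑ᶠ k : ℕ, Module.finrank ℂ
        ((Submodule.restrictScalars ℂ ((Ideal.span {h ^ k} : Ideal R) : Submodule R R)) ⧸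
          Submodule.comap
            (Submodule.restrictScalars ℂ ((Ideal.span {h ^ k} : Ideal R) : Submodule R R)).subtype
            (Submodule.restrictScalars ℂ
              (((Ideal.span {h ^ k} ⊓ b ⊔ Ideal.span {h ^ (k + 1)}) : Ideal R) : Submodule R R))) := by
  classical
  set B : Submodule ℂ R := Submodule.restrictScalars ℂ (b : Submodule R R) with hB
  set H : ℕ → Submodule ℂ R :=
    fun k => Submodule.restrictScalars ℂ ((Ideal.span {h ^ k} : Ideal R) : Submodule R R) with hH
  set D : ℕ → Submodule ℂ R := fun k => B ⊔ H k with hD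
  set A : ℕ → ℕ := fun k => Module.finrank ℂ
        ((Submodule.restrictScalars ℂ ((Ideal.span {h ^ k} : Ideal R) : Submodule R R)) ⧸
          Submodule.comap
            (Submodule.restrictScalars ℂ ((Ideal.span {h ^ k} : Ideal R) : Submodule R R)).subtype
            (Submodule.restrictScalars ℂ
              (((Ideal.span {h ^ k} ⊓ b ⊔ Ideal.span {h ^ (k + 1)}) : Ideal R) : Submodule R R))) with hA
  have hHle : ∀ k, H (k + 1) ≤ H k := by
    intro k x hx
    exact (Ideal.span_singleton_le_span_singleton.2 ⟨h, pow_succ h k⟩) hx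
  -- finite dimensionality
  have eB : (R ⧸ B) ≃ₗ[ℂ] (R ⧸ b) := Submodule.Quotient.restrictScalarsEquiv ℂ (b : Submodule R R)
  haveI : FiniteDimensional ℂ (R ⧸ B) := Module.Finite.equiv eB.symm
  have hDfd : ∀ k, FiniteDimensional ℂ (R ⧸ D k) := by
    intro k
    have hle : B ≤ D k := le_sup_left
    exact Module.Finite.of_surjective
      (Submodule.mapQ B (D k) LinearMap.id (by simpa using hle))
      (fun x => Quotient.inductionOn' x fun y => ⟨Submodule.Quotient.mk y, rfl⟩)
  -- key step
  have key : ∀ k, Module.finrank ℂ (R ⧸ D (k + 1)) = A k + Module.finrank ℂ (R ⧸ D k) := by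
    intro k
    haveI := hDfd (k + 1)
    have hQ : Submodule.restrictScalars ℂ
        (((Ideal.span {h ^ k} ⊓ b ⊔ Ideal.span {h ^ (k + 1)}) : Ideal R) : Submodule R R)
        = H k ⊓ D (k + 1) := by
      rw [restrictScalars_sup9, restrictScalars_inf9]
      rw [hD]
      exact inf_sup_assoc_of_le _ (hHle k)
    have hK : H k ⊔ D (k + 1) = D k := by
      rw [hD]
      rw [sup_comm (H k) (B ⊔ H (k + 1)), sup_assoc]
      congr 1
      exact sup_eq_right.2 (hHle k)
    -- second isomorphism theorem
    have e : ((H k) ⧸ Submodule.comap (H k).subtype ((H k) ⊓ D (k + 1)))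
        ≃ₗ[ℂ] ((H k ⊔ D (k + 1) : Submodule ℂ R) ⧸
            Submodule.comap (H k ⊔ D (k + 1)).subtype (D (k + 1))) :=
      LinearMap.quotientInfEquivSupQuotient (H k) (D (k + 1))
    have hAk : A k = Module.finrank ℂ
        ((H k ⊔ D (k + 1) : Submodule ℂ R) ⧸
          Submodule.comap (H k ⊔ D (k + 1)).subtype (D (k + 1))) := by
      have hQ' : Submodule.comap (H k).subtype
          (Submodule.restrictScalars ℂ
            (((Ideal.span {h ^ k} ⊓ b ⊔ Ideal.span {h ^ (k + 1)}) : Ideal R) : Submodule R R))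
          = Submodule.comap (H k).subtype (H k ⊓ D (k + 1)) := by rw [hQ]
      have e0 := Submodule.quotEquivOfEq _ _ hQ'
      exact (e0.trans e).finrank_eq
    have := finrank_rel9 (H k ⊔ D (k + 1)) (D (k + 1)) le_sup_right
    rw [this, hAk, hK]
  -- get N with h ^ N ∈ b
  have hrad : h ∈ b.radical := by rw [hb]; exact hm
  obtain ⟨N, hN⟩ := hrad
  have hpow : ∀ k, N ≤ k → Ideal.span {h ^ k} ≤ b := by
    intro k hk
    rw [Ideal.span_le, Set.singleton_subset_iff]
    have : h ^ k = h ^ (k - N) * h ^ N := by rw [← pow_add]; congr 1; omega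
    rw [this]
    exact Ideal.mul_mem_left _ _ hN
  -- vanishing of terms for k ≥ N
  have hvanish : ∀ k, N ≤ k → A k = 0 := by
    intro k hk
    have htop : Submodule.comap
            (Submodule.restrictScalars ℂ ((Ideal.span {h ^ k} : Ideal R) : Submodule R R)).subtype
            (Submodule.restrictScalars ℂ
              (((Ideal.span {h ^ k} ⊓ b ⊔ Ideal.span {h ^ (k + 1)}) : Ideal R) : Submodule R R)) = ⊤ := by
      rw [eq_top_iff]
      rintro ⟨x, hx⟩ -
      refine Submodule.mem_comap.2 ?_
      refine Submodule.mem_sup_left ?_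
      exact Submodule.mem_inf.2 ⟨hx, hpow k hk hx⟩
    simp only [hA]
    haveI : Subsingleton
        ((Submodule.restrictScalars ℂ ((Ideal.span {h ^ k} : Ideal R) : Submodule R R)) ⧸
          Submodule.comap
            (Submodule.restrictScalars ℂ ((Ideal.span {h ^ k} : Ideal R) : Submodule R R)).subtype
            (Submodule.restrictScalars ℂ
              (((Ideal.span {h ^ k} ⊓ b ⊔ Ideal.span {h ^ (k + 1)}) : Ideal R) : Submodule R R))) :=
      Submodule.Quotient.subsingleton_iff.2 htop
    exact Module.finrank_zero_of_subsingleton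
  -- telescoping
  have hD0 : D 0 = ⊤ := by
    rw [hD]
    refine eq_top_iff.2 ?_
    intro x _
    refine Submodule.mem_sup_right ?_
    show x ∈ (Ideal.span {h ^ 0} : Ideal R)
    rw [pow_zero, Ideal.span_singleton_one]
    trivial
  have htel : ∀ n, ∑ k ∈ Finset.range n, A k = Module.finrank ℂ (R ⧸ D n) := by
    intro n
    induction n with
    | zero =>
        rw [Finset.sum_range_zero, hD0]
        haveI : Subsingleton (R ⧸ (⊤ : Submodule ℂ R)) :=
          Submodule.Quotient.subsingleton_iff.2 rfl
        exact (Module.finrank_zero_of_subsingleton).symm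
    | succ n ih =>
        rw [Finset.sum_range_succ, ih, key n, add_comm]
  -- conclude
  have hsupp : (Function.support A) ⊆ (Finset.range N : Set ℕ) := by
    intro k hk
    simp only [Finset.coe_range, Set.mem_Iio]
    by_contra hc
    exact hk (hvanish k (by omega))
  rw [finsum_eq_finset_sum_of_support_subset A hsupp, htel N]
  have hDN : D N = B := by
    rw [hD]
    exact sup_eq_left.2 (fun x hx => hpow N le_rfl hx)
  rw [hDN]
  exact eB.finrank_eq.symm
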